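/- Let A* ∈ ℝ^{d×d} be entrywise nonnegative and invertible and let B* ∈ ℝ^{m×d}. For C ∈ ℝ^{d×m}, the inequality C·y(x) − x ≥ 0 holds entrywise for every x ∈ ℝ^d if and only if C·B* = diag(k) for some k ∈ ℝ^d such that, for each j: (a) if A* is a scale transformation with respect to the j-th component, then 1/(1 + A*_{j,j}) ≤ k_j ≤ 1; and (b) if A* is not a scale transformation with respect to the j-th component, then k_j = 1. -/

import Mathlib

open MeasureTheory Matrix

/-- Entrywise rectifier (ReLU). -/
def relu {k : ℕ} (v : Fin k → ℝ) : Fin k → ℝ := fun i => max (v i) 0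

/-- The ground-truth residual unit. -/
def resUnit {d m : ℕ} (A : Matrix (Fin d) (Fin d) ℝ) (B : Matrix (Fin m) (Fin d) ℝ)
    (x : Fin d → ℝ) : Fin m → ℝ :=
  B.mulVec (relu (A.mulVec x) + x)

/-- `A` is a scale transformation with respect to the `j`-th component:
all off-diagonal entries of the `j`-th row vanish. -/
def IsScaleTransform {d : ℕ} (A : Matrix (Fin d) (Fin d) ℝ) (j : Fin d) : Prop :=
  ∀ j', j' ≠ j → A j j' = 0

theorem stmt3 (d m : ℕ) (hd : 1 ≤ d) (hm : d ≤ m)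
    (Astar : Matrix (Fin d) (Fin d) ℝ) (Bstar : Matrix (Fin m) (Fin d) ℝ)
    (hAnn : ∀ i j, 0 ≤ Astar i j) (hAinv : IsUnit Astar.det)
    (C : Matrix (Fin d) (Fin m) ℝ) :
    (∀ x : Fin d → ℝ, ∀ i, x i ≤ C.mulVec (resUnit Astar Bstar x) i) ↔
      ∃ k : Fin d → ℝ, C * Bstar = Matrix.diagonal k ∧
        ∀ j : Fin d,
          (IsScaleTransform Astar j → 1 / (1 + Astar j j) ≤ k j ∧ k j ≤ 1) ∧
          (¬ IsScaleTransform Astar j → k j = 1) := by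
  set M := C * Bstar with hM
  have hres : ∀ x : Fin d → ℝ, ∀ i,
      C.mulVec (resUnit Astar Bstar x) i
        = M.mulVec (relu (Astar.mulVec x)) i + M.mulVec x i := by
    intro x i
    rw [resUnit, Matrix.mulVec_mulVec, ← hM, Matrix.mulVec_add]
    rfl
  constructor
  · intro h
    have hinv2 : Astar⁻¹ * Astar = 1 := Matrix.nonsing_inv_mul _ hAinv
    have hinv1 : Astar * Astar⁻¹ = 1 := Matrix.mul_nonsing_inv _ hAinv
    set N := (M - 1) * Astar⁻¹ with hN
    have hNA : N * Astar = M - 1 := by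
      rw [hN, Matrix.mul_assoc, hinv2, Matrix.mul_one]
    -- key pointwise inequality
    have key : ∀ (j : Fin d) (t : ℝ) (i : Fin d),
        0 ≤ M i j * max t 0 + N i j * t := by
      intro j t i
      set xx := Astar⁻¹.mulVec (Pi.single j t) with hxdef
      have hx := h xx i
      rw [hres] at hx
      have hz : Astar.mulVec xx = Pi.single j t := by
        rw [hxdef, Matrix.mulVec_mulVec, hinv1, Matrix.one_mulVec]
      rw [hz] at hx
      have hrelu : relu (Pi.single j t) = Pi.single j (max t 0) := by
        funext i'
        by_cases h' : i' = j
        · subst h'; simp [relu]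
        · simp [relu, Pi.single_eq_of_ne h']
      rw [hrelu] at hx
      have e1 : M.mulVec (Pi.single j (max t 0)) i = M i j * max t 0 := by
        rw [Matrix.mulVec_single]
        simp only [Pi.smul_apply, Matrix.col_apply, op_smul_eq_mul]
      have hNz : N.mulVec (Pi.single j t) = M.mulVec xx - xx := by
        rw [hN, ← Matrix.mulVec_mulVec, Matrix.sub_mulVec, Matrix.one_mulVec,
          hxdef, Matrix.mulVec_mulVec]
      have hNz' := congrFun hNz i
      rw [Matrix.mulVec_single] at hNz'
      simp only [Pi.sub_apply, Pi.smul_apply, Matrix.col_apply, op_smul_eq_mul] at hNz'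
      rw [e1] at hx
      linarith [hx, hNz']
    have hNle : ∀ i j, N i j ≤ 0 := by
      intro i j
      have := key j (-1) i
      simp at this
      linarith
    have hMN : ∀ i j, 0 ≤ M i j + N i j := by
      intro i j
      have := key j 1 i
      simp at this
      linarith
    have hMnn : ∀ i j, 0 ≤ M i j := by
      intro i j
      have := hMN i j
      have := hNle i j
      linarith
    have hM1 : ∀ i j, M i j - (1 : Matrix (Fin d) (Fin d) ℝ) i j ≤ 0 := by
      intro i j
      have h1 : (M - 1) i j = (N * Astar) i j := by rw [hNA]
      rw [Matrix.sub_apply] at h1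
      rw [h1, Matrix.mul_apply]
      apply Finset.sum_nonpos
      intro l _
      exact mul_nonpos_of_nonpos_of_nonneg (hNle i l) (hAnn l j)
    have hMoff : ∀ i j, i ≠ j → M i j = 0 := by
      intro i j hij
      have h1 := hM1 i j
      rw [Matrix.one_apply_ne hij] at h1
      have h2 := hMnn i j
      linarith
    have hNoff : ∀ i j, i ≠ j → N i j = 0 := by
      intro i j hij
      have h1 := hMN i j
      rw [hMoff i j hij] at h1
      have h2 := hNle i j
      linarith
    refine ⟨fun j => M j j, ?_, ?_⟩
    · apply Matrix.ext
      intro i j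
      by_cases hij : i = j
      · subst hij; simp
      · rw [Matrix.diagonal_apply_ne _ hij, hMoff i j hij]
    · -- row equation : (M - 1) j l = N j j * Astar j l
      have hrow : ∀ j l, M j l - (1 : Matrix (Fin d) (Fin d) ℝ) j l = N j j * Astar j l := by
        intro j l
        have h1 : (M - 1) j l = (N * Astar) j l := by rw [hNA]
        rw [Matrix.sub_apply] at h1
        rw [h1, Matrix.mul_apply]
        apply Finset.sum_eq_single
        · intro b _ hb
          rw [hNoff j b (Ne.symm hb), zero_mul]
        · intro hb; exact absurd (Finset.mem_univ j) hb
      intro j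
      constructor
      · intro hscale
        have hdiag : M j j - 1 = N j j * Astar j j := by
          have := hrow j j
          rwa [Matrix.one_apply_eq] at this
        have hub : M j j ≤ 1 := by
          have := hM1 j j
          rw [Matrix.one_apply_eq] at this
          linarith
        refine ⟨?_, hub⟩
        have hNjj : -(M j j) ≤ N j j := by
          have := hMN j j; linarith
        have hannjj := hAnn j j
        have hlow : -(M j j) * Astar j j ≤ N j j * Astar j j :=
          mul_le_mul_of_nonneg_right hNjj hannjj
        have hpos : 0 < 1 + Astar j j := by linarith
        rw [div_le_iff₀ hpos]
        nlinarith
      · intro hnscale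
        rw [IsScaleTransform] at hnscale
        push_neg at hnscale
        obtain ⟨l, hl, hAl⟩ := hnscale
        have h1 := hrow j l
        rw [Matrix.one_apply_ne (Ne.symm hl), hMoff j l (Ne.symm hl)] at h1
        have h1' : N j j * Astar j l = 0 := by linarith
        have hN0 : N j j = 0 := (mul_eq_zero.mp h1').resolve_right hAl
        have h2 := hrow j j
        rw [Matrix.one_apply_eq, hN0, zero_mul] at h2
        linarith
  · rintro ⟨k, hCB, hk⟩
    intro x i
    rw [hres]
    have hMd : M = Matrix.diagonal k := hCB
    rw [hMd, Matrix.mulVec_diagonal, Matrix.mulVec_diagonal]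
    set t := Astar.mulVec x i with ht
    have hrel : relu (Astar.mulVec x) i = max t 0 := rfl
    rw [hrel]
    by_cases hscale : IsScaleTransform Astar i
    · obtain ⟨hlb, hub⟩ := (hk i).1 hscale
      have hannii := hAnn i i
      have hpos : 0 < 1 + Astar i i := by linarith
      have hklb : 1 ≤ k i * (1 + Astar i i) := by
        rwa [div_le_iff₀ hpos] at hlb
      have htx : t = Astar i i * x i := by
        rw [ht, Matrix.mulVec, dotProduct]
        apply Finset.sum_eq_single
        · intro b _ hb
          rw [hscale b hb, zero_mul]
        · intro hb; exact absurd (Finset.mem_univ i) hb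
      rcases le_or_gt 0 (x i) with hx | hx
      · have hmax : max t 0 = t := max_eq_left (by rw [htx]; positivity)
        rw [hmax, htx]
        nlinarith
      · have hmax : max t 0 = 0 := max_eq_right (by rw [htx]; nlinarith)
        rw [hmax]
        nlinarith
    · have hk1 : k i = 1 := (hk i).2 hscale
      rw [hk1]
      have : 0 ≤ max t 0 := le_max_right _ _
      linarith
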